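/- Let d ∈ {2,3} and s ∈ [0, 1/2]. There exists a constant C > 0, depending only on d and s, such that for all k, t > 0 with kt ≥ 1 and all measurable functions F, G : ℝ^d → [0, ∞), ∫_{{ξ : kt/2 < ‖ξ⁻‖ < 3kt/2 and |ξ_d| > kt/2}} k² (1 + ‖ξ‖²)^s / |den_{k,t}(ξ)| · F(ξ) G(ξ) dξ ≤ C k^{2s} t^{2s−2} ‖F‖_{L²(ℝ^d)} ‖G‖_{L²(ℝ^d)}. -/

import Mathlib

open MeasureTheory
open scoped ENNReal

/-- `‖ξ⁻‖`, the Euclidean norm of the first `d − 1` coordinates of `ξ ∈ ℝ^d`. -/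
noncomputable def xiMinusNorm {d : ℕ} (ξ : EuclideanSpace ℝ (Fin d)) : ℝ :=
  Real.sqrt (∑ i ∈ Finset.univ.filter (fun i : Fin d => (i : ℕ) < d - 1), ξ i ^ 2)

/-- `ξ_d`, the last coordinate of `ξ ∈ ℝ^d`. -/
noncomputable def xiLast {d : ℕ} (hd : 0 < d) (ξ : EuclideanSpace ℝ (Fin d)) : ℝ :=
  ξ ⟨d - 1, Nat.sub_lt hd one_pos⟩

/-- The symbol denominator `den_{k,t}(ξ) = (‖ξ⁻‖² − k²t² + ξ_d²) + 2ik√(t²+1)ξ_d`. -/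
noncomputable def denom (k t : ℝ) {d : ℕ} (hd : 0 < d) (ξ : EuclideanSpace ℝ (Fin d)) : ℂ :=
  ((xiMinusNorm ξ ^ 2 - k ^ 2 * t ^ 2 + xiLast hd ξ ^ 2 : ℝ) : ℂ)
    + 2 * Complex.I * (k : ℂ) * (Real.sqrt (t ^ 2 + 1) : ℂ) * (xiLast hd ξ : ℂ)

lemma real_rpow_add_le {a b s : ℝ} (ha : 0 ≤ a) (hb : 0 ≤ b) (hs : 0 ≤ s) (hs1 : s ≤ 1) :
    (a + b) ^ s ≤ a ^ s + b ^ s := by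
  have h := NNReal.rpow_add_le_add_rpow a.toNNReal b.toNNReal hs hs1
  have h2 := NNReal.coe_le_coe.2 h
  rw [NNReal.coe_rpow, NNReal.coe_add, NNReal.coe_add, NNReal.coe_rpow, NNReal.coe_rpow,
    Real.coe_toNNReal _ ha, Real.coe_toNNReal _ hb] at h2
  exact h2

lemma sq_rpow {x : ℝ} (hx : 0 ≤ x) (s : ℝ) : (x ^ 2) ^ s = x ^ (2 * s) := by
  rw [← Real.rpow_natCast x 2, ← Real.rpow_mul hx]; norm_num

lemma norm_sq_split {d : ℕ} (hd0 : 0 < d) (ξ : EuclideanSpace ℝ (Fin d)) :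
    ‖ξ‖ ^ 2 = xiMinusNorm ξ ^ 2 + xiLast hd0 ξ ^ 2 := by
  have hnn : (0:ℝ) ≤ ∑ i ∈ Finset.univ.filter (fun i : Fin d => (i : ℕ) < d - 1), ξ i ^ 2 :=
    Finset.sum_nonneg fun i _ => sq_nonneg _
  have h1 : xiMinusNorm ξ ^ 2
      = ∑ i ∈ Finset.univ.filter (fun i : Fin d => (i : ℕ) < d - 1), ξ i ^ 2 :=
    Real.sq_sqrt hnn
  have h2 : ‖ξ‖ ^ 2 = ∑ i, ξ i ^ 2 := by
    rw [EuclideanSpace.norm_eq, Real.sq_sqrt (Finset.sum_nonneg fun i _ => sq_nonneg _)]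
    exact Finset.sum_congr rfl fun i _ => by rw [Real.norm_eq_abs, sq_abs]
  have h3 : Finset.univ.filter (fun i : Fin d => ¬ (i : ℕ) < d - 1)
      = {⟨d - 1, Nat.sub_lt hd0 one_pos⟩} := by
    ext i
    simp only [Finset.mem_filter, Finset.mem_univ, true_and, Finset.mem_singleton, Fin.ext_iff]
    have := i.isLt
    omega
  rw [h2, h1, ← Finset.sum_filter_add_sum_filter_not Finset.univ
    (fun i : Fin d => (i : ℕ) < d - 1), h3, Finset.sum_singleton]
  rfl

lemma denom_im (k t : ℝ) {d : ℕ} (hd0 : 0 < d) (ξ : EuclideanSpace ℝ (Fin d)) :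
    (denom k t hd0 ξ).im = 2 * k * Real.sqrt (t ^ 2 + 1) * xiLast hd0 ξ := by
  simp [denom, ← Complex.ofReal_pow]

lemma abs_denom_ge {d : ℕ} (hd0 : 0 < d) {k t : ℝ} (hk : 0 < k) (ht : 0 < t)
    (ξ : EuclideanSpace ℝ (Fin d)) :
    2 * k * t * |xiLast hd0 ξ| ≤ ‖denom k t hd0 ξ‖ := by
  have hsq : t ≤ Real.sqrt (t ^ 2 + 1) := by
    nlinarith [Real.sq_sqrt (by positivity : (0:ℝ) ≤ t^2+1), Real.sqrt_nonneg (t^2+1)]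
  calc 2 * k * t * |xiLast hd0 ξ| ≤ 2 * k * Real.sqrt (t ^ 2 + 1) * |xiLast hd0 ξ| := by
        gcongr
    _ = |(denom k t hd0 ξ).im| := by
        rw [denom_im, abs_mul,
          abs_of_nonneg (by positivity : (0:ℝ) ≤ 2 * k * Real.sqrt (t ^ 2 + 1))]
    _ ≤ ‖denom k t hd0 ξ‖ := Complex.abs_im_le_norm _

/-- Purely real-variable form of the pointwise symbol bound. -/
lemma pointwise_real {s k t x A N : ℝ} (hs : 0 ≤ s) (hs' : s ≤ 1 / 2)
    (hk : 0 < k) (ht : 0 < t) (hkt : 1 ≤ k * t)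
    (h3 : k * t / 2 < |x|) (hA1 : 2 * k * t * |x| ≤ A)
    (hN0 : 0 ≤ N) (hb1 : 1 + N ≤ 4 * (k ^ 2 * t ^ 2 + x ^ 2)) :
    k ^ 2 * (1 + N) ^ s / A ≤ 4 * k ^ (2 * s) * t ^ (2 * s - 2) := by
  have hx0 : 0 < |x| := lt_of_le_of_lt (by positivity) h3
  have hA2 : k ^ 2 * t ^ 2 ≤ A := by nlinarith
  have hApos : 0 < A := by nlinarith
  have hM : (0:ℝ) < k ^ (2 * s) * t ^ (2 * s - 2) := by positivity
  rw [div_le_iff₀ hApos]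
  have hb2 : (1 + N) ^ s ≤ 2 * ((k ^ 2 * t ^ 2) ^ s + (x ^ 2) ^ s) := by
    have e1 : (1 + N) ^ s ≤ (4 * (k ^ 2 * t ^ 2 + x ^ 2)) ^ s :=
      Real.rpow_le_rpow (by positivity) hb1 hs
    have e2 : (4 * (k ^ 2 * t ^ 2 + x ^ 2)) ^ s
        = 4 ^ s * (k ^ 2 * t ^ 2 + x ^ 2) ^ s :=
      Real.mul_rpow (by norm_num) (by positivity)
    have e3 : (4:ℝ) ^ s ≤ 2 := by
      calc (4:ℝ) ^ s ≤ 4 ^ (1/2 : ℝ) :=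
            Real.rpow_le_rpow_of_exponent_le (by norm_num) hs'
        _ = 2 := by
            rw [show (4:ℝ) = 2 ^ (2:ℕ) by norm_num, ← Real.rpow_natCast 2 2,
              ← Real.rpow_mul (by norm_num)]
            norm_num
    have e4 : (k ^ 2 * t ^ 2 + x ^ 2) ^ s ≤ (k ^ 2 * t ^ 2) ^ s + (x ^ 2) ^ s :=
      real_rpow_add_le (by positivity) (sq_nonneg _) hs (by linarith)
    have e5 : (0:ℝ) ≤ (k ^ 2 * t ^ 2 + x ^ 2) ^ s := Real.rpow_nonneg (by positivity) _
    nlinarith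
  have hL1 : k ^ 2 * (k ^ 2 * t ^ 2) ^ s = k ^ (2 * s) * t ^ (2 * s - 2) * (k ^ 2 * t ^ 2) := by
    rw [Real.mul_rpow (sq_nonneg k) (sq_nonneg t), sq_rpow hk.le, sq_rpow ht.le]
    rw [show (2:ℝ) * s - 2 = 2 * s + (-2) from by ring, Real.rpow_add ht,
      Real.rpow_neg ht.le, ← Real.rpow_natCast t 2]
    push_cast
    field_simp
  have hL2 : k ^ 2 * (x ^ 2) ^ s ≤ k ^ (2 * s) * t ^ (2 * s - 2) * (2 * k * t * |x|) := by
    have hx2 : (x ^ 2) ^ s = |x| ^ (2 * s) := by rw [← sq_abs, sq_rpow (abs_nonneg x)]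
    have hsplit : |x| ^ (2 * s) = |x| ^ (2 * s - 1) * |x| := by
      conv_lhs => rw [show (2:ℝ) * s = (2 * s - 1) + 1 from by ring]
      rw [Real.rpow_add hx0, Real.rpow_one]
    have hmono : |x| ^ (2 * s - 1) ≤ (k * t / 2) ^ (2 * s - 1) :=
      Real.rpow_le_rpow_of_nonpos (by positivity) h3.le (by linarith)
    have hkt2 : (k * t / 2) ^ (2 * s - 1) ≤ 2 * (k * t) ^ (2 * s - 1) := by
      rw [Real.div_rpow (by positivity) (by norm_num)]
      rw [div_le_iff₀ (by positivity : (0:ℝ) < (2:ℝ) ^ (2 * s - 1))]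
      have h21 : (1:ℝ) ≤ 2 ^ (2 * s - 1) * 2 := by
        have h22 : (2:ℝ) ^ (-1 : ℝ) ≤ 2 ^ (2 * s - 1) :=
          Real.rpow_le_rpow_of_exponent_le (by norm_num) (by linarith)
        rw [Real.rpow_neg_one] at h22
        nlinarith
      nlinarith [Real.rpow_nonneg (show (0:ℝ) ≤ k * t by positivity) (2 * s - 1)]
    have hkt3 : (k * t) ^ (2 * s - 1) = k ^ (2 * s - 1) * t ^ (2 * s - 1) :=
      Real.mul_rpow hk.le ht.le
    have e1 : k ^ (2 * s) = k ^ (2 * s - 1) * k := by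
      conv_lhs => rw [show (2:ℝ) * s = (2 * s - 1) + 1 from by ring]
      rw [Real.rpow_add hk, Real.rpow_one]
    have e2 : t ^ (2 * s - 2) = t ^ (2 * s - 1) / t := by
      conv_lhs => rw [show (2:ℝ) * s - 2 = (2 * s - 1) - 1 from by ring]
      rw [Real.rpow_sub ht, Real.rpow_one]
    have hfinal : k ^ 2 * (2 * (k ^ (2 * s - 1) * t ^ (2 * s - 1)))
        = k ^ (2 * s) * t ^ (2 * s - 2) * (2 * k * t) := by
      rw [e1, e2]; field_simp
    calc k ^ 2 * (x ^ 2) ^ s = k ^ 2 * (|x| ^ (2 * s - 1) * |x|) := by rw [hx2, hsplit]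
      _ ≤ k ^ 2 * (2 * (k ^ (2 * s - 1) * t ^ (2 * s - 1)) * |x|) := by
          have h5 := hmono.trans hkt2
          rw [hkt3] at h5
          have h6 : |x| ^ (2 * s - 1) * |x| ≤ 2 * (k ^ (2 * s - 1) * t ^ (2 * s - 1)) * |x| :=
            mul_le_mul_of_nonneg_right h5 (abs_nonneg x)
          nlinarith
      _ = k ^ (2 * s) * t ^ (2 * s - 2) * (2 * k * t) * |x| := by rw [← hfinal]; ring
      _ = k ^ (2 * s) * t ^ (2 * s - 2) * (2 * k * t * |x|) := by ring
  have hpow2 : (0:ℝ) ≤ (x ^ 2) ^ s := Real.rpow_nonneg (sq_nonneg x) _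
  have hpow1 : (0:ℝ) ≤ (k ^ 2 * t ^ 2) ^ s := Real.rpow_nonneg (by positivity) _
  calc k ^ 2 * (1 + N) ^ s
      ≤ k ^ 2 * (2 * ((k ^ 2 * t ^ 2) ^ s + (x ^ 2) ^ s)) := by nlinarith
    _ = 2 * (k ^ 2 * (k ^ 2 * t ^ 2) ^ s) + 2 * (k ^ 2 * (x ^ 2) ^ s) := by ring
    _ ≤ 2 * (k ^ (2 * s) * t ^ (2 * s - 2) * A) + 2 * (k ^ (2 * s) * t ^ (2 * s - 2) * A) := by
        have b1 : k ^ 2 * (k ^ 2 * t ^ 2) ^ s ≤ k ^ (2 * s) * t ^ (2 * s - 2) * A := by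
          rw [hL1]; exact mul_le_mul_of_nonneg_left hA2 hM.le
        have b2 : k ^ 2 * (x ^ 2) ^ s ≤ k ^ (2 * s) * t ^ (2 * s - 2) * A :=
          hL2.trans (mul_le_mul_of_nonneg_left hA1 hM.le)
        linarith
    _ = 4 * k ^ (2 * s) * t ^ (2 * s - 2) * A := by ring

/-- Estimate of the term `II₁`, over the region
`{ξ : kt/2 < ‖ξ⁻‖ < 3kt/2, |ξ_d| > kt/2}`, in the unique continuation argument. -/
theorem stmt_7 (d : ℕ) (hd : d = 2 ∨ d = 3) (s : ℝ) (hs : 0 ≤ s) (hs' : s ≤ 1 / 2) :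
    ∃ C > (0 : ℝ), ∀ k t : ℝ, 0 < k → 0 < t → 1 ≤ k * t →
      ∀ F G : EuclideanSpace ℝ (Fin d) → ℝ, Measurable F → Measurable G →
        (∀ ξ, 0 ≤ F ξ) → (∀ ξ, 0 ≤ G ξ) →
        (∫⁻ ξ in {ξ | k * t / 2 < xiMinusNorm ξ ∧ xiMinusNorm ξ < 3 * k * t / 2
              ∧ k * t / 2 < |xiLast (by omega) ξ|},
            ENNReal.ofReal (k ^ 2 * (1 + ‖ξ‖ ^ 2) ^ s
              / ‖denom k t (by omega) ξ‖ * F ξ * G ξ)) ≤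
          ENNReal.ofReal (C * k ^ (2 * s) * t ^ (2 * s - 2))
            * (∫⁻ ξ, ENNReal.ofReal (F ξ ^ 2)) ^ (1 / 2 : ℝ)
            * (∫⁻ ξ, ENNReal.ofReal (G ξ ^ 2)) ^ (1 / 2 : ℝ) := by
  have hd0 : 0 < d := by omega
  refine ⟨4, by norm_num, ?_⟩
  intro k t hk ht hkt F G hF hG hF0 hG0
  set M : ℝ := 4 * k ^ (2 * s) * t ^ (2 * s - 2) with hMdef
  have hM0 : 0 ≤ M := by positivity
  have hxmM : Measurable (fun ξ : EuclideanSpace ℝ (Fin d) => xiMinusNorm ξ) := by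
    unfold xiMinusNorm
    exact (Finset.measurable_sum _ fun i _ => ((EuclideanSpace.proj (𝕜 := ℝ) i).continuous.measurable.pow_const 2)).sqrt
  have hxlM : Measurable (fun ξ : EuclideanSpace ℝ (Fin d) => xiLast hd0 ξ) := by
    unfold xiLast
    exact (EuclideanSpace.proj (𝕜 := ℝ) (⟨d - 1, Nat.sub_lt hd0 one_pos⟩ : Fin d)).continuous.measurable
  have hS : MeasurableSet {ξ : EuclideanSpace ℝ (Fin d) |
      k * t / 2 < xiMinusNorm ξ ∧ xiMinusNorm ξ < 3 * k * t / 2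
        ∧ k * t / 2 < |xiLast hd0 ξ|} := by
    refine MeasurableSet.inter ?_ (MeasurableSet.inter ?_ ?_)
    · exact measurableSet_lt measurable_const hxmM
    · exact measurableSet_lt hxmM measurable_const
    · exact measurableSet_lt measurable_const hxlM.abs
  have hFae : AEMeasurable (fun ξ : EuclideanSpace ℝ (Fin d) => ENNReal.ofReal (F ξ)) :=
    (ENNReal.measurable_ofReal.comp hF).aemeasurable
  have hGae : AEMeasurable (fun ξ : EuclideanSpace ℝ (Fin d) => ENNReal.ofReal (G ξ)) :=
    (ENNReal.measurable_ofReal.comp hG).aemeasurable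
  have hconj : Real.HolderConjugate 2 2 := Real.HolderConjugate.two_two
  calc (∫⁻ ξ in {ξ : EuclideanSpace ℝ (Fin d) |
            k * t / 2 < xiMinusNorm ξ ∧ xiMinusNorm ξ < 3 * k * t / 2
              ∧ k * t / 2 < |xiLast hd0 ξ|},
          ENNReal.ofReal (k ^ 2 * (1 + ‖ξ‖ ^ 2) ^ s
            / ‖denom k t hd0 ξ‖ * F ξ * G ξ))
      ≤ ∫⁻ ξ in {ξ : EuclideanSpace ℝ (Fin d) |
            k * t / 2 < xiMinusNorm ξ ∧ xiMinusNorm ξ < 3 * k * t / 2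
              ∧ k * t / 2 < |xiLast hd0 ξ|},
          ENNReal.ofReal M * (ENNReal.ofReal (F ξ) * ENNReal.ofReal (G ξ)) := by
        refine setLIntegral_mono' hS fun ξ hξ => ?_
        obtain ⟨h1, h2, h3⟩ := hξ
        have hmn : 0 ≤ xiMinusNorm ξ := Real.sqrt_nonneg _
        have hb1 : 1 + ‖ξ‖ ^ 2 ≤ 4 * (k ^ 2 * t ^ 2 + xiLast hd0 ξ ^ 2) := by
          have hns := norm_sq_split hd0 ξ
          nlinarith
        have hq : k ^ 2 * (1 + ‖ξ‖ ^ 2) ^ s / ‖denom k t hd0 ξ‖ ≤ M :=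
          pointwise_real hs hs' hk ht hkt h3 (abs_denom_ge hd0 hk ht ξ) (by positivity) hb1
        have hq0 : 0 ≤ k ^ 2 * (1 + ‖ξ‖ ^ 2) ^ s / ‖denom k t hd0 ξ‖ := by
          have := Real.rpow_nonneg (show (0:ℝ) ≤ 1 + ‖ξ‖^2 by positivity) s
          positivity
        rw [← ENNReal.ofReal_mul (hF0 ξ), ← ENNReal.ofReal_mul hM0]
        apply ENNReal.ofReal_le_ofReal
        calc k ^ 2 * (1 + ‖ξ‖ ^ 2) ^ s / ‖denom k t hd0 ξ‖ * F ξ * G ξ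
            ≤ M * F ξ * G ξ :=
              mul_le_mul_of_nonneg_right (mul_le_mul_of_nonneg_right hq (hF0 ξ)) (hG0 ξ)
          _ = M * (F ξ * G ξ) := by ring
    _ ≤ ∫⁻ ξ, ENNReal.ofReal M * (ENNReal.ofReal (F ξ) * ENNReal.ofReal (G ξ)) :=
        setLIntegral_le_lintegral _ _
    _ = ENNReal.ofReal M * ∫⁻ ξ, ENNReal.ofReal (F ξ) * ENNReal.ofReal (G ξ) :=
        lintegral_const_mul' _ _ ENNReal.ofReal_ne_top
    _ ≤ ENNReal.ofReal M *
          ((∫⁻ ξ, ENNReal.ofReal (F ξ) ^ (2:ℝ)) ^ (1/2 : ℝ)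
            * (∫⁻ ξ, ENNReal.ofReal (G ξ) ^ (2:ℝ)) ^ (1/2 : ℝ)) := by
        refine mul_le_mul_right ?_ _
        exact ENNReal.lintegral_mul_le_Lp_mul_Lq volume hconj hFae hGae
    _ = ENNReal.ofReal M * ((∫⁻ ξ, ENNReal.ofReal (F ξ ^ 2)) ^ (1/2 : ℝ)
            * (∫⁻ ξ, ENNReal.ofReal (G ξ ^ 2)) ^ (1/2 : ℝ)) := by
        congr 2
        · congr 1
          exact lintegral_congr fun ξ => by
            rw [ENNReal.rpow_two, ← ENNReal.ofReal_pow (hF0 ξ)]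
        · congr 1
          exact lintegral_congr fun ξ => by
            rw [ENNReal.rpow_two, ← ENNReal.ofReal_pow (hG0 ξ)]
    _ = ENNReal.ofReal (4 * k ^ (2 * s) * t ^ (2 * s - 2))
          * (∫⁻ ξ, ENNReal.ofReal (F ξ ^ 2)) ^ (1/2 : ℝ)
          * (∫⁻ ξ, ENNReal.ofReal (G ξ ^ 2)) ^ (1/2 : ℝ) := by
        rw [hMdef]; ring
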